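/- Let ι be a finite nonempty index set, let λ : ι → ℝ satisfy λ i ≥ 0 for all i and ∑ᵢ λ i = 1, and let r : ι → ℝ satisfy 0 < a ≤ r i ≤ b for all i (for real numbers a, b). Set Z := ∑ⱼ λ j · r j and λ' i := λ i · r i / Z. Then Z > 0, ∑ᵢ λ' i = 1, and the total variation distance satisfies (1/2)·∑ᵢ |λ i − λ' i| ≤ 1 − a/b. -/

import Mathlib

theorem stmt_2 {ι : Type*} [Fintype ι] [Nonempty ι]
    (w r : ι → ℝ) (a b : ℝ)
    (hw0 : ∀ i, 0 ≤ w i) (hw1 : ∑ i, w i = 1)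
    (ha : 0 < a) (hra : ∀ i, a ≤ r i) (hrb : ∀ i, r i ≤ b) :
    0 < (∑ j, w j * r j) ∧
    (∑ i, w i * r i / (∑ j, w j * r j)) = 1 ∧
    (1 / 2) * ∑ i, |w i - w i * r i / (∑ j, w j * r j)| ≤ 1 - a / b := by
  set Z := ∑ j, w j * r j with hZdef
  have haZ : a ≤ Z := by
    calc a = ∑ i, w i * a := by rw [← Finset.sum_mul, hw1, one_mul]
    _ ≤ Z := Finset.sum_le_sum fun i _ => mul_le_mul_of_nonneg_left (hra i) (hw0 i)
  have hZb : Z ≤ b := by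
    calc Z ≤ ∑ i, w i * b := Finset.sum_le_sum fun i _ => mul_le_mul_of_nonneg_left (hrb i) (hw0 i)
    _ = b := by rw [← Finset.sum_mul, hw1, one_mul]
  have hZ0 : 0 < Z := lt_of_lt_of_le ha haZ
  refine ⟨hZ0, ?_, ?_⟩
  · rw [← Finset.sum_div, ← hZdef, div_eq_one_iff_eq hZ0.ne']
  · have hx : ∀ i, |w i - w i * r i / Z| = |w i * (Z - r i)| / Z := by
      intro i
      rw [show w i - w i * r i / Z = (w i * (Z - r i)) / Z by field_simp,
        abs_div, abs_of_pos hZ0]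
    have hsum0 : ∑ i, w i * (Z - r i) = 0 := by
      simp only [mul_sub]
      rw [Finset.sum_sub_distrib, ← Finset.sum_mul, hw1, one_mul, ← hZdef]
      exact sub_self Z
    have habs : ∑ i, |w i * (Z - r i)| ≤ 2 * (Z - a) := by
      have : ∀ i ∈ Finset.univ, |w i * (Z - r i)| ≤ 2 * (w i * (Z - a)) - w i * (Z - r i) := by
        intro i _
        have h1 : w i * (Z - r i) ≤ w i * (Z - a) :=
          mul_le_mul_of_nonneg_left (by linarith [hra i]) (hw0 i)
        have h2 : 0 ≤ w i * (Z - a) := mul_nonneg (hw0 i) (by linarith)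
        rw [abs_le]
        constructor <;> nlinarith
      calc ∑ i, |w i * (Z - r i)| ≤ ∑ i, (2 * (w i * (Z - a)) - w i * (Z - r i)) :=
            Finset.sum_le_sum this
        _ = 2 * (Z - a) := by
            rw [Finset.sum_sub_distrib, hsum0, sub_zero, ← Finset.mul_sum, ← Finset.sum_mul,
              hw1, one_mul]
    calc (1 / 2) * ∑ i, |w i - w i * r i / Z|
        = (1 / 2) * ((∑ i, |w i * (Z - r i)|) / Z) := by
          rw [Finset.sum_div]; congr 1; exact Finset.sum_congr rfl fun i _ => hx i
      _ ≤ (1 / 2) * ((2 * (Z - a)) / Z) := by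
          gcongr
      _ = 1 - a / Z := by field_simp
      _ ≤ 1 - a / b := by
          have : a / b ≤ a / Z := div_le_div_of_nonneg_left ha.le hZ0 hZb
          linarith
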